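/- Let d ≥ 1, N ≥ 2, let ρ be a rotation-invariant probability measure on ℝ^d, and let λ be the pushforward of ρ under the map x ↦ |x| (a probability measure on [0,∞)). Let c(x_1,...,x_N) = ∑_{1≤i<j≤N} 1/|x_i - x_j| be the Coulomb cost and define, for (r_1,...,r_N) ∈ (0,∞)^N, c̃(r_1,...,r_N) = inf{ c(x_1,...,x_N) : x_i ∈ ℝ^d, |x_i| = r_i for all i }. Then for every γ ∈ Π(ρ,...,ρ), the pushforward γ̃ of γ under the map (x_1,...,x_N) ↦ (|x_1|,...,|x_N|) belongs to Π(λ,...,λ) and ∫ c̃ dγ̃ ≤ ∫ c dγ. -/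

import Mathlib

open MeasureTheory ENNReal

/-- For a rotation-invariant probability `ρ` on `ℝ^d`, `λ` its radial
pushforward, `c` the Coulomb cost and `c̃` the reduced radial cost, any plan
`γ ∈ Π(ρ,…,ρ)` has radial pushforward `γ̃ ∈ Π(λ,…,λ)` with `∫ c̃ dγ̃ ≤ ∫ c dγ`. -/
theorem radial_component_of_plan
    (d N : ℕ) (hd : 1 ≤ d) (hN : 2 ≤ N)
    (ρ : Measure (EuclideanSpace ℝ (Fin d))) [IsProbabilityMeasure ρ]
    (hrot : ∀ R : EuclideanSpace ℝ (Fin d) ≃ₗᵢ[ℝ] EuclideanSpace ℝ (Fin d),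
      Measure.map R ρ = ρ)
    (lam : Measure ℝ) (hlam : lam = Measure.map (fun x => ‖x‖) ρ)
    (c : (Fin N → EuclideanSpace ℝ (Fin d)) → ℝ≥0∞)
    (hc : c = fun x =>
      ∑ p ∈ Finset.univ.filter (fun p : Fin N × Fin N => p.1 < p.2),
        (edist (x p.1) (x p.2))⁻¹)
    (ctil : (Fin N → ℝ) → ℝ≥0∞)
    (hctil : ctil = fun r =>
      ⨅ (x : Fin N → EuclideanSpace ℝ (Fin d)) (_ : ∀ i, ‖x i‖ = r i), c x)
    (γ : Measure (Fin N → EuclideanSpace ℝ (Fin d))) [IsProbabilityMeasure γ]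
    (hγ : ∀ i, Measure.map (fun x => x i) γ = ρ)
    (γtil : Measure (Fin N → ℝ))
    (hγtil : γtil = Measure.map (fun x (i : Fin N) => ‖x i‖) γ) :
    IsProbabilityMeasure γtil ∧ (∀ i, Measure.map (fun r => r i) γtil = lam) ∧
      ∫⁻ r, ctil r ∂γtil ≤ ∫⁻ x, c x ∂γ := by
  have hf : Measurable (fun x : Fin N → EuclideanSpace ℝ (Fin d) => fun i : Fin N => ‖x i‖) :=
    measurable_pi_lambda _ fun i => (measurable_pi_apply i).norm
  subst hγtil
  refine ⟨Measure.isProbabilityMeasure_map hf.aemeasurable, ?_, ?_⟩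
  · intro i
    rw [Measure.map_map (measurable_pi_apply i) hf, hlam, ← hγ i,
      Measure.map_map (measurable_norm : Measurable fun x : EuclideanSpace ℝ (Fin d) => ‖x‖) (measurable_pi_apply i)]
    rfl
  · calc ∫⁻ r, ctil r ∂(Measure.map (fun x (i : Fin N) => ‖x i‖) γ)
        ≤ ∫⁻ x, ctil (fun i => ‖x i‖) ∂γ := lintegral_map_le ctil _
      _ ≤ ∫⁻ x, c x ∂γ := by
          refine lintegral_mono fun x => ?_
          rw [hctil]
          exact iInf₂_le x fun i => rfl
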